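/- Let k ≥ 3 and r be coprime natural numbers with 0 < r < k. Let γ : ℝ → ℂ be a C²-smooth, 2π-periodic map, injective on [0, 2π), whose image is the boundary of a strictly convex body K ⊆ ℂ. Let B : ℂ → ℂ be an ℝ-linear map of exact order k with B(γ(t)) = γ(t + 2πr/k) for all t ∈ ℝ, and suppose there is a constant λ > 0 such that γ(t + 4πr/k) − γ(t) = λ·γ'(t + 2πr/k) for all t ∈ ℝ. Then there exist complex numbers c₁, c₋₁ such that γ(t) = c₁·e^{it} + c₋₁·e^{−it} for all t ∈ ℝ; in particular, the image of γ is an ellipse. -/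

import Mathlib

open Complex Real Set intervalIntegral

lemma rep (B : ℂ →ₗ[ℝ] ℂ) : ∃ a b : ℂ, ∀ z, B z = a*z + b*(starRingEnd ℂ z) := by
  refine ⟨(B 1 - I*B I)/2, (B 1 + I*B I)/2, fun z => ?_⟩
  have h : B z = (z.re:ℂ) * B 1 + (z.im:ℂ) * B I := by
    have hz : z = z.re • (1:ℂ) + z.im • I := by
      simp [Complex.real_smul, Complex.re_add_im]
    rw [show B z = B (z.re • (1:ℂ) + z.im • I) by rw [← hz]]
    rw [map_add, map_smul, map_smul, Complex.real_smul, Complex.real_smul]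
  have hz : z = (z.re:ℂ) + (z.im:ℂ)*I := (Complex.re_add_im z).symm
  have hc : (starRingEnd ℂ) z = (z.re:ℂ) - (z.im:ℂ)*I := by
    apply Complex.ext <;> simp
  have hI := Complex.I_sq
  linear_combination h - ((B 1 - I*B I)/2) * hz - ((B 1 + I*B I)/2) * hc + ((z.im:ℂ) * B I) * hI

lemma per_int_deriv (φ φ' : ℝ → ℝ) (hd : ∀ t, HasDerivAt φ (φ' t) t)
    (hc : Continuous φ') (hper : φ (2*π) = φ 0) :
    ∫ t in (0:ℝ)..(2*π), φ' t = 0 := by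
  rw [integral_eq_sub_of_hasDerivAt (fun t _ => hd t) (hc.intervalIntegrable _ _), hper, sub_self]

lemma integral_facts (x x' x'' y y' y'' : ℝ → ℝ)
    (hx : ∀ t, HasDerivAt x (x' t) t) (hx' : ∀ t, HasDerivAt x' (x'' t) t)
    (hy : ∀ t, HasDerivAt y (y' t) t) (hy' : ∀ t, HasDerivAt y' (y'' t) t)
    (cx : Continuous x) (cx' : Continuous x') (cx'' : Continuous x'')
    (cy : Continuous y) (cy' : Continuous y') (cy'' : Continuous y'')
    (perx : x (2*π) = x 0) (perx' : x' (2*π) = x' 0)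
    (pery : y (2*π) = y 0) (pery' : y' (2*π) = y' 0)
    (cr dr : ℝ)
    (odex : ∀ t, x'' t = cr * x' t + dr * x t)
    (odey : ∀ t, y'' t = cr * y' t + dr * y t)
    (hE1 : 0 < ∫ t in (0:ℝ)..(2*π), (x' t^2 + y' t^2)) :
    cr = 0 ∧ dr * (∫ t in (0:ℝ)..(2*π), (x t^2 + y t^2))
      = -(∫ t in (0:ℝ)..(2*π), (x' t^2 + y' t^2)) := by
  have hD1 : ∀ t, HasDerivAt (fun t => (x t * x t + y t * y t)/2) (x t * x' t + y t * y' t) t := by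
    intro t
    have h := (((hx t).mul (hx t)).add ((hy t).mul (hy t))).div_const 2
    exact h.congr_deriv (by ring)
  have I1 : ∫ t in (0:ℝ)..(2*π), (x t * x' t + y t * y' t) = 0 :=
    per_int_deriv _ _ hD1 (by fun_prop) (by simp [perx, pery])
  have hD2 : ∀ t, HasDerivAt (fun t => (x' t * x' t + y' t * y' t)/2) (x' t * x'' t + y' t * y'' t) t := by
    intro t
    have h := (((hx' t).mul (hx' t)).add ((hy' t).mul (hy' t))).div_const 2
    exact h.congr_deriv (by ring)
  have I2 : ∫ t in (0:ℝ)..(2*π), (x' t * x'' t + y' t * y'' t) = 0 :=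
    per_int_deriv _ _ hD2 (by fun_prop) (by simp [perx', pery'])
  have hD3 : ∀ t, HasDerivAt (fun t => x t * x' t + y t * y' t)
      ((x' t^2 + y' t^2) + (x t * x'' t + y t * y'' t)) t := by
    intro t
    have h := ((hx t).mul (hx' t)).add ((hy t).mul (hy' t))
    exact h.congr_deriv (by ring)
  have I3 : ∫ t in (0:ℝ)..(2*π), ((x' t^2 + y' t^2) + (x t * x'' t + y t * y'' t)) = 0 :=
    per_int_deriv _ _ hD3 (by fun_prop) (by simp [perx, pery, perx', pery'])
  -- rewrite I2 using ode
  have J2 : ∫ t in (0:ℝ)..(2*π), (x' t * x'' t + y' t * y'' t)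
      = cr * (∫ t in (0:ℝ)..(2*π), (x' t^2 + y' t^2))
        + dr * (∫ t in (0:ℝ)..(2*π), (x t * x' t + y t * y' t)) := by
    rw [← intervalIntegral.integral_const_mul, ← intervalIntegral.integral_const_mul,
      ← intervalIntegral.integral_add]
    · apply intervalIntegral.integral_congr
      intro t _
      simp only [odex, odey]; ring
    · exact (by fun_prop : Continuous fun t => cr * (x' t^2 + y' t^2)).intervalIntegrable _ _
    · exact (by fun_prop : Continuous fun t => dr * (x t * x' t + y t * y' t)).intervalIntegrable _ _
  have J3 : ∫ t in (0:ℝ)..(2*π), (x t * x'' t + y t * y'' t)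
      = cr * (∫ t in (0:ℝ)..(2*π), (x t * x' t + y t * y' t))
        + dr * (∫ t in (0:ℝ)..(2*π), (x t^2 + y t^2)) := by
    rw [← intervalIntegral.integral_const_mul, ← intervalIntegral.integral_const_mul,
      ← intervalIntegral.integral_add]
    · apply intervalIntegral.integral_congr
      intro t _
      simp only [odex, odey]; ring
    · exact (by fun_prop : Continuous fun t => cr * (x t * x' t + y t * y' t)).intervalIntegrable _ _
    · exact (by fun_prop : Continuous fun t => dr * (x t^2 + y t^2)).intervalIntegrable _ _
  have I3' : (∫ t in (0:ℝ)..(2-2)*π, (0:ℝ)) = 0 := by simp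
  have Isplit : (∫ t in (0:ℝ)..(2*π), (x' t^2 + y' t^2))
      + (∫ t in (0:ℝ)..(2*π), (x t * x'' t + y t * y'' t)) = 0 := by
    rw [← intervalIntegral.integral_add
      ((by fun_prop : Continuous fun t => x' t^2 + y' t^2).intervalIntegrable _ _)
      ((by fun_prop : Continuous fun t => x t * x'' t + y t * y'' t).intervalIntegrable _ _)]
    exact I3
  have hcr : cr = 0 := by
    have h := I2
    rw [J2, I1] at h
    have := hE1
    rcases mul_eq_zero.mp (by linarith : cr * (∫ t in (0:ℝ)..(2*π), (x' t^2 + y' t^2)) = 0) with h'|h'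
    · exact h'
    · exact absurd h' (ne_of_gt hE1)
  refine ⟨hcr, ?_⟩
  rw [J3, hcr, I1] at Isplit
  simp only [zero_mul, zero_add] at Isplit
  linarith

lemma ode_cos (ω : ℝ) (hω : 0 < ω) (u u' u'' : ℝ → ℝ)
    (hu : ∀ t, HasDerivAt u (u' t) t) (hu' : ∀ t, HasDerivAt u' (u'' t) t)
    (hode : ∀ t, u'' t = -(ω^2) * u t) :
    ∀ t, u t = Real.cos (ω*t) * u 0 + Real.sin (ω*t) * (u' 0 / ω) := by
  have hlin : ∀ t : ℝ, HasDerivAt (fun s : ℝ => ω * s) ω t := by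
    intro t
    simpa using (hasDerivAt_id t).const_mul ω
  have hcos : ∀ t : ℝ, HasDerivAt (fun s => Real.cos (ω*s)) (-Real.sin (ω*t) * ω) t :=
    fun t => (Real.hasDerivAt_cos (ω*t)).comp t (hlin t)
  have hsin : ∀ t : ℝ, HasDerivAt (fun s => Real.sin (ω*s)) (Real.cos (ω*t) * ω) t :=
    fun t => (Real.hasDerivAt_sin (ω*t)).comp t (hlin t)
  set h : ℝ → ℝ := fun t => u t - Real.cos (ω*t) * u 0 - Real.sin (ω*t) * (u' 0 / ω) with hh
  set h' : ℝ → ℝ := fun t => u' t + Real.sin (ω*t) * ω * u 0 - Real.cos (ω*t) * u' 0 with hh'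
  have hdh : ∀ t, HasDerivAt h (h' t) t := by
    intro t
    have := ((hu t).sub ((hcos t).mul_const (u 0))).sub ((hsin t).mul_const (u' 0 / ω))
    exact this.congr_deriv (by simp only [hh']; field_simp; ring)
  have hdh' : ∀ t, HasDerivAt h' (-(ω^2) * h t) t := by
    intro t
    have := (((hu' t).add (((hsin t).mul_const ω).mul_const (u 0)))).sub ((hcos t).mul_const (u' 0))
    exact this.congr_deriv (by rw [hode t]; simp only [hh]; field_simp; ring)
  set E : ℝ → ℝ := fun t => h' t * h' t + ω^2 * (h t * h t) with hE
  have hdE : ∀ t, HasDerivAt E 0 t := by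
    intro t
    have := ((hdh' t).mul (hdh' t)).add ((((hdh t).mul (hdh t))).const_mul (ω^2))
    exact this.congr_deriv (by ring)
  have hconst : ∀ t, E t = E 0 := by
    intro t
    exact is_const_of_deriv_eq_zero (fun s => (hdE s).differentiableAt)
      (fun s => (hdE s).deriv) t 0
  have hE0 : E 0 = 0 := by
    simp only [hE, hh, hh']
    norm_num
  intro t
  have ht := hconst t
  rw [hE0] at ht
  simp only [hE] at ht
  have hs : h t * h t = 0 := by
    have h1 : h t * h t ≤ 0 := by
      nlinarith [mul_self_nonneg (h' t), mul_self_nonneg (h t), pow_pos hω 2]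
    exact le_antisymm h1 (mul_self_nonneg (h t))
  have h2 : h t = 0 := mul_self_eq_zero.mp hs
  have : u t - Real.cos (ω*t) * u 0 - Real.sin (ω*t) * (u' 0 / ω) = 0 := h2
  linarith

lemma not_injOn_scalar (f : ℝ → ℝ) (a b : ℝ) (hab : a < b) (hfc : ContinuousOn f (Icc a b))
    (hfe : f a = f b) :
    ∃ s t, s ∈ Ico a b ∧ t ∈ Ico a b ∧ s ≠ t ∧ f s = f t := by
  set m := (a+b)/2 with hm
  have ham : a ≤ m := by simp [hm]; linarith
  have hmb : m ≤ b := by simp [hm]; linarith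
  have ham' : a < m := by simp [hm]; linarith
  have hmb' : m < b := by simp [hm]; linarith
  rcases lt_trichotomy (f m) (f a) with h|h|h
  · -- f m < f a : use IVT on [a,m] decreasing-ish and [m,b]
    set y := (f m + f a)/2 with hy
    have hy1 : f m < y := by simp [hy]; linarith
    have hy2 : y < f a := by simp [hy]; linarith
    have hs : ∃ s ∈ Icc a m, f s = y := by
      have := intermediate_value_Icc' ham (hfc.mono (Icc_subset_Icc le_rfl hmb))
      have hmem : y ∈ Icc (f m) (f a) := ⟨le_of_lt hy1, le_of_lt hy2⟩
      obtain ⟨s, hs1, hs2⟩ := this hmem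
      exact ⟨s, hs1, hs2⟩
    have ht : ∃ t ∈ Icc m b, f t = y := by
      have := intermediate_value_Icc hmb (hfc.mono (Icc_subset_Icc ham le_rfl))
      have hmem : y ∈ Icc (f m) (f b) := ⟨le_of_lt hy1, by rw [← hfe]; exact le_of_lt hy2⟩
      obtain ⟨t, ht1, ht2⟩ := this hmem
      exact ⟨t, ht1, ht2⟩
    obtain ⟨s, hs1, hs2⟩ := hs
    obtain ⟨t, ht1, ht2⟩ := ht
    have hsm : s ≠ m := fun h' => by rw [h'] at hs2; exact absurd hs2 hy1.ne
    have htb : t ≠ b := fun h' => by rw [h'] at ht2; rw [← hfe] at ht2; exact absurd ht2 hy2.ne'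
    refine ⟨s, t, ⟨hs1.1, lt_of_le_of_lt hs1.2 hmb'⟩, ⟨le_trans ham ht1.1, lt_of_le_of_ne ht1.2 htb⟩, ?_, by rw [hs2, ht2]⟩
    intro hst
    rw [hst] at hs1
    have : t = m := le_antisymm hs1.2 ht1.1
    rw [← hst] at this
    exact hsm this
  · exact ⟨a, m, ⟨le_refl a, lt_of_lt_of_le ham' hmb⟩, ⟨ham, hmb'⟩, ne_of_lt ham', h.symm⟩
  · -- f m > f a
    set y := (f a + f m)/2 with hy
    have hy1 : f a < y := by simp [hy]; linarith
    have hy2 : y < f m := by simp [hy]; linarith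
    have hs : ∃ s ∈ Icc a m, f s = y := by
      have := intermediate_value_Icc ham (hfc.mono (Icc_subset_Icc le_rfl hmb))
      have hmem : y ∈ Icc (f a) (f m) := ⟨le_of_lt hy1, le_of_lt hy2⟩
      obtain ⟨s, hs1, hs2⟩ := this hmem
      exact ⟨s, hs1, hs2⟩
    have ht : ∃ t ∈ Icc m b, f t = y := by
      have := intermediate_value_Icc' hmb (hfc.mono (Icc_subset_Icc ham le_rfl))
      have hmem : y ∈ Icc (f b) (f m) := ⟨by rw [← hfe]; exact le_of_lt hy1, le_of_lt hy2⟩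
      obtain ⟨t, ht1, ht2⟩ := this hmem
      exact ⟨t, ht1, ht2⟩
    obtain ⟨s, hs1, hs2⟩ := hs
    obtain ⟨t, ht1, ht2⟩ := ht
    have hsm : s ≠ m := fun h' => by rw [h'] at hs2; exact absurd hs2 hy2.ne'
    have htb : t ≠ b := fun h' => by rw [h'] at ht2; rw [← hfe] at ht2; exact absurd ht2 hy1.ne
    refine ⟨s, t, ⟨hs1.1, lt_of_le_of_lt hs1.2 hmb'⟩, ⟨le_trans ham ht1.1, lt_of_le_of_ne ht1.2 htb⟩, ?_, by rw [hs2, ht2]⟩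
    intro hst
    rw [hst] at hs1
    have : t = m := le_antisymm hs1.2 ht1.1
    rw [← hst] at this
    exact hsm this
theorem stmt_12 (k r : ℕ) (hk : 3 ≤ k) (hcop : Nat.Coprime r k)
    (hr0 : 0 < r) (hrk : r < k)
    (γ : ℝ → ℂ) (hγ : ContDiff ℝ 2 γ)
    (hper : ∀ t : ℝ, γ (t + 2 * Real.pi) = γ t)
    (hinj : Set.InjOn γ (Set.Ico 0 (2 * Real.pi)))
    (K : Set ℂ) (hKcomp : IsCompact K) (hKconv : Convex ℝ K)
    (hKint : (interior K).Nonempty) (hKstrict : StrictConvex ℝ K)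
    (hbd : Set.range γ = frontier K)
    (B : ℂ →ₗ[ℝ] ℂ)
    (hBk : B ^ k = 1) (hBj : ∀ j : ℕ, 0 < j → j < k → B ^ j ≠ 1)
    (hBγ : ∀ t : ℝ, B (γ t) = γ (t + 2 * Real.pi * r / k))
    (lam : ℝ) (hlam : 0 < lam)
    (heq : ∀ t : ℝ, γ (t + 4 * Real.pi * r / k) - γ t =
      (lam : ℂ) * deriv γ (t + 2 * Real.pi * r / k)) :
    ∃ c₁ cneg : ℂ, ∀ t : ℝ,
      γ t = c₁ * Complex.exp (Complex.I * t) + cneg * Complex.exp (-(Complex.I * t)) := by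
  have pi_gt : (3:ℝ) < π := Real.pi_gt_three
  have twopi_pos : (0:ℝ) < 2*π := by linarith
  have h1 : Differentiable ℝ γ := hγ.differentiable (by norm_num)
  have h2 : ContDiff ℝ 1 (deriv γ) := by
    rw [show (2 : WithTop ℕ∞) = 1 + 1 from rfl, contDiff_succ_iff_deriv] at hγ
    exact hγ.2.2
  have h3 : Differentiable ℝ (deriv γ) := h2.differentiable (by norm_num)
  have hcont0 : Continuous γ := h1.continuous
  have hcont1 : Continuous (deriv γ) := h3.continuous
  have hcont2 : Continuous (deriv (deriv γ)) := (contDiff_one_iff_deriv.mp h2).2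
  have hd : ∀ t, HasDerivAt γ (deriv γ t) t := fun t => (h1 t).hasDerivAt
  have hd' : ∀ t, HasDerivAt (deriv γ) (deriv (deriv γ) t) t := fun t => (h3 t).hasDerivAt
  have hlamC : (lam:ℂ) ≠ 0 := by exact_mod_cast ne_of_gt hlam
  have hper0 : γ (2*π) = γ 0 := by have := hper 0; rwa [zero_add] at this
  -- first-order ODE : lam * γ' = (B - B^(k-1)) γ
  have ode1 : ∀ t : ℝ, (lam:ℂ) * deriv γ t = B (γ t) - (B^(k-1)) (γ t) := by
    intro t
    set a : ℝ := 2 * Real.pi * r / k with ha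
    have hCB : (B^(k-1)) (B (γ (t-a))) = γ (t - a) := by
      have hp : (B^(k-1)) * B = B ^ k := by
        rw [← pow_succ]; congr 1; omega
      have h2' := LinearMap.congr_fun hp (γ (t-a))
      simp only [Module.End.mul_apply] at h2'
      rw [h2', hBk]; rfl
    have hshift : B (γ (t - a)) = γ t := by rw [hBγ]; ring_nf
    have hprev : γ (t - a) = (B^(k-1)) (γ t) := by rw [← hshift, hCB]
    have h4 := heq (t - a)
    have e1 : t - a + 4 * Real.pi * r / k = t + a := by rw [ha]; ring
    have e2 : t - a + 2 * Real.pi * r / k = t := by rw [ha]; ring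
    rw [e1, e2] at h4
    have hta : γ (t + a) = B (γ t) := (hBγ t).symm
    rw [hta, hprev] at h4
    exact h4.symm
  obtain ⟨j1, j2, hJ⟩ := rep (B - B^(k-1))
  have hJ' : ∀ t, (lam:ℂ) * deriv γ t = j1 * γ t + j2 * (starRingEnd ℂ) (γ t) := by
    intro t
    rw [ode1 t, ← LinearMap.sub_apply, hJ]
  obtain ⟨A1, A2, eq1⟩ : ∃ A1 A2 : ℂ, ∀ t, deriv γ t = A1 * γ t + A2 * (starRingEnd ℂ) (γ t) := by
    refine ⟨j1/lam, j2/lam, fun t => ?_⟩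
    field_simp
    linear_combination hJ' t
  -- second-order ODE with real coefficients
  obtain ⟨cr, dr, eq2⟩ : ∃ cr dr : ℝ, ∀ t, deriv (deriv γ) t
      = (cr:ℂ) * deriv γ t + (dr:ℂ) * γ t := by
    refine ⟨2*A1.re, Complex.normSq A2 - Complex.normSq A1, fun t => ?_⟩
    have hdd : HasDerivAt (deriv γ)
        (A1 * deriv γ t + A2 * (starRingEnd ℂ) (deriv γ t)) t := by
      have hthis : HasDerivAt (fun s => A1 * γ s + A2 * (starRingEnd ℂ) (γ s))
          (A1 * deriv γ t + A2 * (starRingEnd ℂ) (deriv γ t)) t := by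
        have hstar : HasDerivAt (fun s => (starRingEnd ℂ) (γ s))
            ((starRingEnd ℂ) (deriv γ t)) t := by
          simpa using (hd t).star
        exact ((hd t).const_mul A1).add (hstar.const_mul A2)
      have hfun : (fun s => A1 * γ s + A2 * (starRingEnd ℂ) (γ s)) = deriv γ :=
        funext fun s => (eq1 s).symm
      rwa [hfun] at hthis
    rw [hdd.deriv]
    have e1 := eq1 t
    have ec : (starRingEnd ℂ) (deriv γ t) = (starRingEnd ℂ) A1 * (starRingEnd ℂ) (γ t)
        + (starRingEnd ℂ) A2 * γ t := by
      rw [eq1 t]; simp [map_add, map_mul]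
    have hre : ((2*A1.re : ℝ):ℂ) = A1 + (starRingEnd ℂ) A1 := (Complex.add_conj A1).symm
    have hn1 : ((Complex.normSq A1 : ℝ):ℂ) = A1 * (starRingEnd ℂ) A1 := (Complex.mul_conj A1).symm
    have hn2 : ((Complex.normSq A2 : ℝ):ℂ) = A2 * (starRingEnd ℂ) A2 := (Complex.mul_conj A2).symm
    rw [Complex.ofReal_sub, hre, hn1, hn2]
    linear_combination (-((starRingEnd ℂ) A1)) * e1 + A2 * ec
  -- coordinates
  have hdx : ∀ t, HasDerivAt (fun t => (γ t).re) ((deriv γ t).re) t := fun t =>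
    (Complex.reCLM.hasFDerivAt.comp_hasDerivAt t (hd t))
  have hdy : ∀ t, HasDerivAt (fun t => (γ t).im) ((deriv γ t).im) t := fun t =>
    (Complex.imCLM.hasFDerivAt.comp_hasDerivAt t (hd t))
  have hdx' : ∀ t, HasDerivAt (fun t => (deriv γ t).re) ((deriv (deriv γ) t).re) t := fun t =>
    (Complex.reCLM.hasFDerivAt.comp_hasDerivAt t (hd' t))
  have hdy' : ∀ t, HasDerivAt (fun t => (deriv γ t).im) ((deriv (deriv γ) t).im) t := fun t =>
    (Complex.imCLM.hasFDerivAt.comp_hasDerivAt t (hd' t))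
  have hperd : deriv γ (2*π) = deriv γ 0 := by
    have hcomp : HasDerivAt (fun s : ℝ => γ (s + 2*π)) (deriv γ (0 + 2*π)) 0 :=
      HasDerivAt.comp_add_const 0 (2*π) (hd (0 + 2*π))
    have hfun : (fun s : ℝ => γ (s + 2*π)) = γ := funext hper
    rw [hfun] at hcomp
    have := hcomp.unique (hd 0)
    rwa [zero_add] at this
  have odex : ∀ t, (deriv (deriv γ) t).re = cr * (deriv γ t).re + dr * (γ t).re := by
    intro t
    have := congrArg Complex.re (eq2 t)
    simpa [Complex.add_re, Complex.re_ofReal_mul] using this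
  have odey : ∀ t, (deriv (deriv γ) t).im = cr * (deriv γ t).im + dr * (γ t).im := by
    intro t
    have := congrArg Complex.im (eq2 t)
    simpa [Complex.add_im, Complex.im_ofReal_mul] using this
  -- E1 > 0
  have hE1pos : 0 < ∫ t in (0:ℝ)..(2*π), ((deriv γ t).re^2 + (deriv γ t).im^2) := by
    by_cases hz : ∀ t ∈ Set.Icc (0:ℝ) (2*π), deriv γ t = 0
    · exfalso
      have hγ1 : γ 1 = γ 0 := by
        have hFTC : ∫ t in (0:ℝ)..1, deriv γ t = γ 1 - γ 0 :=
          integral_eq_sub_of_hasDerivAt (fun t _ => hd t) (hcont1.intervalIntegrable _ _)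
        have hzero : (∫ t in (0:ℝ)..1, deriv γ t) = ∫ _t in (0:ℝ)..1, (0:ℂ) := by
          apply intervalIntegral.integral_congr
          intro t ht
          rw [Set.uIcc_of_le (by norm_num : (0:ℝ) ≤ 1)] at ht
          exact hz t ⟨ht.1, le_trans ht.2 (by linarith)⟩
        rw [hzero] at hFTC
        simp at hFTC
        exact (sub_eq_zero.mp hFTC.symm)
      have h01 : (0:ℝ) ∈ Set.Ico (0:ℝ) (2*π) := ⟨le_refl _, twopi_pos⟩
      have h11 : (1:ℝ) ∈ Set.Ico (0:ℝ) (2*π) := ⟨by norm_num, by linarith⟩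
      exact one_ne_zero (hinj h11 h01 hγ1)
    · push_neg at hz
      obtain ⟨t0, ht0, hne⟩ := hz
      apply intervalIntegral.integral_pos twopi_pos
      · exact (Continuous.continuousOn (by fun_prop))
      · intro t _; positivity
      · refine ⟨t0, ht0, ?_⟩
        have hns := Complex.normSq_pos.mpr hne
        rw [Complex.normSq_apply] at hns
        nlinarith [hns]
  -- apply integral facts
  obtain ⟨hcr0, hdrE⟩ := integral_facts (fun t => (γ t).re) (fun t => (deriv γ t).re)
    (fun t => (deriv (deriv γ) t).re) (fun t => (γ t).im) (fun t => (deriv γ t).im)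
    (fun t => (deriv (deriv γ) t).im) hdx hdx' hdy hdy'
    (Complex.continuous_re.comp hcont0) (Complex.continuous_re.comp hcont1)
    (Complex.continuous_re.comp hcont2)
    (Complex.continuous_im.comp hcont0) (Complex.continuous_im.comp hcont1)
    (Complex.continuous_im.comp hcont2)
    (by simp only [hper0]) (by simp only [hperd]) (by simp only [hper0]) (by simp only [hperd])
    cr dr odex odey hE1pos
  have hE0nn : 0 ≤ ∫ t in (0:ℝ)..(2*π), ((γ t).re^2 + (γ t).im^2) :=
    intervalIntegral.integral_nonneg (le_of_lt twopi_pos) (fun u _ => by positivity)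
  have hdrneg : dr < 0 := by
    by_contra hcon
    push_neg at hcon
    nlinarith [mul_nonneg hcon hE0nn]
  set ω := Real.sqrt (-dr) with hωdef
  have hω : 0 < ω := Real.sqrt_pos.mpr (by linarith)
  have hω2 : ω^2 = -dr := Real.sq_sqrt (by linarith)
  have hxode : ∀ t, (deriv (deriv γ) t).re = -(ω^2) * (γ t).re := by
    intro t; rw [odex t, hcr0, hω2]; ring
  have hyode : ∀ t, (deriv (deriv γ) t).im = -(ω^2) * (γ t).im := by
    intro t; rw [odey t, hcr0, hω2]; ring
  have hxcos := ode_cos ω hω (fun t => (γ t).re) (fun t => (deriv γ t).re)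
    (fun t => (deriv (deriv γ) t).re) hdx hdx' hxode
  have hycos := ode_cos ω hω (fun t => (γ t).im) (fun t => (deriv γ t).im)
    (fun t => (deriv (deriv γ) t).im) hdy hdy' hyode
  set u : ℂ := γ 0 with hu
  set v : ℂ := deriv γ 0 / (ω:ℝ) with hv
  have hform : ∀ t, γ t = ((Real.cos (ω*t) : ℝ):ℂ) * u + ((Real.sin (ω*t) : ℝ):ℂ) * v := by
    intro t
    apply Complex.ext
    · simp only [Complex.add_re, Complex.re_ofReal_mul, hu, hv, Complex.div_ofReal_re]
      exact hxcos t
    · simp only [Complex.add_im, Complex.im_ofReal_mul, hu, hv, Complex.div_ofReal_im]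
      exact hycos t
  -- degenerate (collinear) case gives contradiction with injectivity
  have scalar_contra : ∀ (f : ℝ → ℝ) (w : ℂ), Continuous f → w ≠ 0 →
      (∀ t, γ t = ((f t : ℝ):ℂ) * w) → False := by
    intro f w hfc hw hformf
    have hfe : f (2*π) = f 0 := by
      have h2' : ((f (2*π) : ℝ) : ℂ) * w = ((f 0 : ℝ):ℂ) * w := by
        rw [← hformf, ← hformf, hper0]
      have := mul_right_cancel₀ hw h2'
      exact_mod_cast this
    obtain ⟨s, t, hs, ht, hst, hfst⟩ :=
      not_injOn_scalar f 0 (2*π) twopi_pos hfc.continuousOn hfe.symm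
    exact hst (hinj hs ht (by rw [hformf, hformf, hfst]))
  by_cases hWz : u.re * v.im - u.im * v.re = 0
  · exfalso
    by_cases hu0 : u = 0
    · by_cases hv0 : v = 0
      · have hγ1 : γ 1 = γ 0 := by
          rw [hform 1, hform 0, hu0, hv0]; simp
        have h01 : (0:ℝ) ∈ Set.Ico (0:ℝ) (2*π) := ⟨le_refl _, twopi_pos⟩
        have h11 : (1:ℝ) ∈ Set.Ico (0:ℝ) (2*π) := ⟨by norm_num, by linarith⟩
        exact one_ne_zero (hinj h11 h01 hγ1)
      · exact scalar_contra (fun t => Real.sin (ω*t)) v (by fun_prop) hv0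
          (fun t => by rw [hform t, hu0]; simp)
    · have hnu : Complex.normSq u ≠ 0 := ne_of_gt (Complex.normSq_pos.mpr hu0)
      set q : ℝ := (v.re*u.re + v.im*u.im)/Complex.normSq u with hq
      have hvq : v = ((q:ℝ):ℂ) * u := by
        rw [hq]
        apply Complex.ext
        · rw [Complex.re_ofReal_mul]
          rw [Complex.normSq_apply] at hnu ⊢
          rw [eq_comm, div_mul_eq_mul_div, div_eq_iff hnu]
          linear_combination u.im * hWz
        · rw [Complex.im_ofReal_mul]
          rw [Complex.normSq_apply] at hnu ⊢
          rw [eq_comm, div_mul_eq_mul_div, div_eq_iff hnu]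
          linear_combination (-u.re) * hWz
      exact scalar_contra (fun t => Real.cos (ω*t) + q * Real.sin (ω*t)) u (by fun_prop) hu0
        (fun t => by rw [hform t, hvq]; push_cast; ring)
  · -- independent case: ω = 1
    have hEq : ((Real.cos (ω*(2*π)) : ℝ):ℂ) * u + ((Real.sin (ω*(2*π)) : ℝ):ℂ) * v = u := by
      rw [← hform (2*π)]
      exact hper0
    have hre0 := congrArg Complex.re hEq
    have him0 := congrArg Complex.im hEq
    simp only [Complex.add_re, Complex.re_ofReal_mul, Complex.add_im,
      Complex.im_ofReal_mul] at hre0 him0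
    have hcosθ : Real.cos (ω*(2*π)) = 1 := by
      have hWeq : (Real.cos (ω*(2*π)) - 1) * (u.re * v.im - u.im * v.re) = 0 := by
        linear_combination v.im * hre0 - v.re * him0
      rcases mul_eq_zero.mp hWeq with h'|h'
      · linarith
      · exact absurd h' hWz
    obtain ⟨n, hn⟩ := (Real.cos_eq_one_iff _).mp hcosθ
    have hωn : ω = (n:ℝ) := (mul_right_cancel₀ (ne_of_gt twopi_pos) hn).symm
    have hn1 : (n:ℝ) = 1 := by
      have hnpos : (0:ℝ) < n := by rw [← hωn]; exact hω
      by_contra hne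
      have hn2 : (2:ℝ) ≤ (n:ℝ) := by
        have : (1:ℤ) ≤ n := by exact_mod_cast hnpos
        have : (1:ℤ) < n := lt_of_le_of_ne this (by
          intro h'; apply hne; rw [← h']; norm_num)
        exact_mod_cast this
      set s : ℝ := 2*π/ω with hs
      have hωne : ω ≠ 0 := ne_of_gt hω
      have hωs : ω * s = 2*π := by rw [hs, mul_comm, div_mul_cancel₀ _ hωne]
      have hγs : γ s = γ 0 := by
        rw [hform s, hωs, Real.cos_two_pi, Real.sin_two_pi]
        simp [hu]
      have hspos : 0 < s := by rw [hs]; exact div_pos twopi_pos hω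
      have hslt : s < 2*π := by
        rw [hs, div_lt_iff₀ hω]
        nlinarith [twopi_pos, hn2, hωn]
      have := hinj ⟨le_of_lt hspos, hslt⟩ ⟨le_refl _, twopi_pos⟩ hγs
      linarith
    have hω1 : ω = 1 := by rw [hωn, hn1]
    refine ⟨(u - Complex.I*v)/2, (u + Complex.I*v)/2, fun t => ?_⟩
    have hft := hform t
    rw [hω1, one_mul] at hft
    rw [hft]
    have he1 : Complex.exp (Complex.I*(t:ℂ)) = ((Real.cos t:ℝ):ℂ) + ((Real.sin t:ℝ):ℂ)*Complex.I := by
      rw [mul_comm, Complex.exp_mul_I, Complex.ofReal_cos, Complex.ofReal_sin]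
    have he2 : Complex.exp (-(Complex.I*(t:ℂ))) = ((Real.cos t:ℝ):ℂ) - ((Real.sin t:ℝ):ℂ)*Complex.I := by
      rw [show -(Complex.I*(t:ℂ)) = ((-t:ℝ):ℂ)*Complex.I by push_cast; ring,
        Complex.exp_mul_I, Complex.ofReal_neg, Complex.cos_neg, Complex.sin_neg,
        ← Complex.ofReal_cos, ← Complex.ofReal_sin]
      ring
    rw [he1, he2]
    have hI := Complex.I_sq
    linear_combination (((Real.sin t:ℝ):ℂ) * v) * hI
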